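/- Let X₁, X₂ ∈ ℝ^{L×K} be matrices with rank(X₁) = r₁, rank(X₂) = r₂ and rank(X₁ + X₂) = r₁ + r₂ = r. Then there exist symmetric positive semidefinite matrices L ∈ ℝ^{L×L} and R ∈ ℝ^{K×K} of rank r, an L-orthonormal family P₁,…,P_r ∈ ℝ^L, an R-orthonormal family Q₁,…,Q_r ∈ ℝ^K, and positive reals σ₁,…,σ_r such that X₁ = Σ_{i=1}^{r₁} σ_i P_i Q_iᵀ, X₂ = Σ_{i=r₁+1}^{r} σ_i P_i Q_iᵀ, and σ_i ≠ σ_j whenever i ≤ r₁ < j (the sets of singular values of the two components in the (L,R)-SVD are disjoint); that is, X₁ and X₂ are strongly (L,R)-separable. -/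

import Mathlib

open Matrix

private lemma dot_mulVec_eq_entry {m n : ℕ} (v : Fin n → Fin m → ℝ)
    (M : Matrix (Fin m) (Fin m) ℝ) (i j : Fin n) :
    v i ⬝ᵥ (M *ᵥ v j) = (Matrix.of v * M * (Matrix.of v)ᵀ) i j := by
  simp only [Matrix.mul_apply, Matrix.mulVec, dotProduct, Matrix.transpose_apply,
    Matrix.of_apply, Finset.sum_mul, Finset.mul_sum]
  rw [Finset.sum_comm]
  exact Finset.sum_congr rfl fun a _ => Finset.sum_congr rfl fun b _ => by ring

private lemma exists_gram {m n : ℕ} (v : Fin n → Fin m → ℝ)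
    (hv : LinearIndependent ℝ v) :
    ∃ Lm : Matrix (Fin m) (Fin m) ℝ, Lm.PosSemidef ∧ Lm.rank = n ∧
      ∀ i j, v i ⬝ᵥ (Lm *ᵥ v j) = if i = j then (1 : ℝ) else 0 := by
  set V : Matrix (Fin n) (Fin m) ℝ := Matrix.of v with hVdef
  have hVrank : V.rank = n := by have := hv.rank_matrix; simp only [Fintype.card_fin] at this; exact this
  set G : Matrix (Fin n) (Fin n) ℝ := V * Vᵀ with hGdef
  have hGrank : G.rank = n := by rw [hGdef, Matrix.rank_self_mul_transpose, hVrank]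
  have hGunit : IsUnit G.det := by
    rw [← Matrix.isUnit_iff_isUnit_det, ← Matrix.mulVec_surjective_iff_isUnit]
    have h1 : LinearMap.range G.mulVecLin = ⊤ := by
      apply Submodule.eq_top_of_finrank_eq
      rw [show Module.finrank ℝ ↥(LinearMap.range G.mulVecLin) = G.rank from rfl, hGrank,
        Module.finrank_fin_fun]
    intro y
    obtain ⟨x, hx⟩ := (LinearMap.range_eq_top.1 h1) y
    exact ⟨x, hx⟩
  have hGt : Gᵀ = G := by rw [hGdef, Matrix.transpose_mul, Matrix.transpose_transpose]
  set B : Matrix (Fin n) (Fin m) ℝ := G⁻¹ * V with hBdef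
  refine ⟨Bᵀ * B, ?_, ?_, ?_⟩
  · have := Matrix.posSemidef_conjTranspose_mul_self B
    simpa using this
  · rw [Matrix.rank_transpose_mul_self, hBdef,
      Matrix.rank_mul_eq_right_of_isUnit_det G⁻¹ V (Matrix.isUnit_nonsing_inv_det G hGunit),
      hVrank]
  · have hBt : Bᵀ = Vᵀ * G⁻¹ := by
      rw [hBdef, Matrix.transpose_mul, Matrix.transpose_nonsing_inv, hGt]
    have key : V * (Bᵀ * B) * Vᵀ = 1 := by
      rw [hBt, hBdef]
      have : V * (Vᵀ * G⁻¹ * (G⁻¹ * V)) * Vᵀ = (V * Vᵀ * G⁻¹) * (G⁻¹ * (V * Vᵀ)) := by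
        simp only [Matrix.mul_assoc]
      rw [this, ← hGdef, Matrix.mul_nonsing_inv G hGunit, Matrix.nonsing_inv_mul G hGunit,
        Matrix.one_mul]
    intro i j
    rw [dot_mulVec_eq_entry v (Bᵀ * B) i j, ← hVdef, key, Matrix.one_apply]

private lemma exists_rank_one_decomp {L K n : ℕ} (X : Matrix (Fin L) (Fin K) ℝ)
    (hX : X.rank = n) :
    ∃ (b : Fin n → Fin L → ℝ) (q : Fin n → Fin K → ℝ),
      X = ∑ i, vecMulVec (b i) (q i) := by
  let B : Module.Basis (Fin n) ℝ (LinearMap.range X.mulVecLin) :=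
    Module.finBasisOfFinrankEq ℝ _ (by
      rw [show Module.finrank ℝ ↥(LinearMap.range X.mulVecLin) = X.rank from rfl, hX])
  refine ⟨fun i => (B i : Fin L → ℝ),
    fun i j => B.repr ⟨X *ᵥ Pi.single j 1,
      ⟨Pi.single j 1, by simp [Matrix.mulVecLin_apply]⟩⟩ i, ?_⟩
  ext a j
  set w : LinearMap.range X.mulVecLin :=
    ⟨X *ᵥ Pi.single j 1, ⟨Pi.single j 1, by simp [Matrix.mulVecLin_apply]⟩⟩ with hw
  have h := B.sum_repr w
  have h2 : ((∑ i, B.repr w i • B i : LinearMap.range X.mulVecLin) : Fin L → ℝ) a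
      = ((w : Fin L → ℝ)) a := by rw [h]
  have h3 : ((w : Fin L → ℝ)) a = X a j := by
    rw [hw]; simp
  simp only [Submodule.coe_sum, Submodule.coe_smul, Finset.sum_apply, Pi.smul_apply,
    smul_eq_mul] at h2
  rw [h3] at h2
  rw [← h2]
  simp only [Matrix.sum_apply, Matrix.vecMulVec_apply]
  exact Finset.sum_congr rfl fun i _ => mul_comm _ _

private lemma li_of_decomp {L K n : ℕ} (X : Matrix (Fin L) (Fin K) ℝ)
    (b : Fin n → Fin L → ℝ) (q : Fin n → Fin K → ℝ)
    (hd : X = ∑ i, vecMulVec (b i) (q i)) (hr : X.rank = n) :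
    LinearIndependent ℝ b := by
  rw [linearIndependent_iff_card_eq_finrank_span]
  have hle : LinearMap.range X.mulVecLin ≤ Submodule.span ℝ (Set.range b) := by
    rintro y ⟨x, rfl⟩
    have hx : X.mulVecLin x = ∑ i, (q i ⬝ᵥ x) • b i := by
      ext a
      simp only [Matrix.mulVecLin_apply, hd, Matrix.mulVec, dotProduct,
        Matrix.sum_apply, Matrix.vecMulVec_apply, Finset.sum_apply, Pi.smul_apply,
        smul_eq_mul, Finset.sum_mul, Finset.mul_sum]
      rw [Finset.sum_comm]
      exact Finset.sum_congr rfl fun i _ => Finset.sum_congr rfl fun k _ => by ring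
    rw [hx]
    exact Submodule.sum_mem _ fun i _ =>
      Submodule.smul_mem _ _ (Submodule.subset_span ⟨i, rfl⟩)
  have h1 : n ≤ (Set.range b).finrank ℝ := by
    have := Submodule.finrank_mono hle
    rw [show Module.finrank ℝ ↥(LinearMap.range X.mulVecLin) = X.rank from rfl, hr] at this
    exact this
  have h2 : (Set.range b).finrank ℝ ≤ n := by
    simpa using finrank_range_le_card b
  simp only [Fintype.card_fin]
  omega

theorem strong_LR_separability (Lp Kp r₁ r₂ : ℕ)
    (X₁ X₂ : Matrix (Fin Lp) (Fin Kp) ℝ)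
    (h₁ : X₁.rank = r₁) (h₂ : X₂.rank = r₂)
    (hsum : (X₁ + X₂).rank = r₁ + r₂) :
    ∃ (Lm : Matrix (Fin Lp) (Fin Lp) ℝ) (R : Matrix (Fin Kp) (Fin Kp) ℝ)
      (P : Fin (r₁ + r₂) → Fin Lp → ℝ) (Q : Fin (r₁ + r₂) → Fin Kp → ℝ)
      (σ : Fin (r₁ + r₂) → ℝ),
      Lm.PosSemidef ∧ R.PosSemidef ∧
      Lm.rank = r₁ + r₂ ∧ R.rank = r₁ + r₂ ∧
      (∀ i j, P i ⬝ᵥ (Lm *ᵥ P j) = if i = j then (1 : ℝ) else 0) ∧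
      (∀ i j, Q i ⬝ᵥ (R *ᵥ Q j) = if i = j then (1 : ℝ) else 0) ∧
      (∀ i, 0 < σ i) ∧
      X₁ = ∑ i ∈ Finset.univ.filter (fun i : Fin (r₁ + r₂) => (i : ℕ) < r₁),
        σ i • vecMulVec (P i) (Q i) ∧
      X₂ = ∑ i ∈ Finset.univ.filter (fun i : Fin (r₁ + r₂) => r₁ ≤ (i : ℕ)),
        σ i • vecMulVec (P i) (Q i) ∧
      (∀ i j : Fin (r₁ + r₂), (i : ℕ) < r₁ → r₁ ≤ (j : ℕ) → σ i ≠ σ j) := by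
  obtain ⟨b₁, q₁, hd₁⟩ := exists_rank_one_decomp X₁ h₁
  obtain ⟨b₂, q₂, hd₂⟩ := exists_rank_one_decomp X₂ h₂
  set e : Fin r₁ ⊕ Fin r₂ ≃ Fin (r₁ + r₂) := finSumFinEquiv with hedef
  set P : Fin (r₁ + r₂) → Fin Lp → ℝ := fun i => Sum.elim b₁ b₂ (e.symm i) with hPdef
  set Qr : Fin (r₁ + r₂) → Fin Kp → ℝ := fun i => Sum.elim q₁ q₂ (e.symm i) with hQrdef
  have hsplit : ∀ {M : Type} [AddCommMonoid M] (f : Fin (r₁ + r₂) → M),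
      ∑ i, f i = (∑ j : Fin r₁, f (e (Sum.inl j))) + ∑ j : Fin r₂, f (e (Sum.inr j)) := by
    intro M _ f
    rw [← Fintype.sum_equiv e (fun s => f (e s)) f (fun s => rfl), Fintype.sum_sum_type]
  have hPl : ∀ j : Fin r₁, P (e (Sum.inl j)) = b₁ j := fun j => by
    simp [hPdef]
  have hPr : ∀ j : Fin r₂, P (e (Sum.inr j)) = b₂ j := fun j => by
    simp [hPdef]
  have hQl : ∀ j : Fin r₁, Qr (e (Sum.inl j)) = q₁ j := fun j => by
    simp [hQrdef]
  have hQr2 : ∀ j : Fin r₂, Qr (e (Sum.inr j)) = q₂ j := fun j => by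
    simp [hQrdef]
  have hcl : ∀ j : Fin r₁, ((e (Sum.inl j) : Fin (r₁ + r₂)) : ℕ) < r₁ := fun j => by
    simp [hedef]
  have hcr : ∀ j : Fin r₂, r₁ ≤ ((e (Sum.inr j) : Fin (r₁ + r₂)) : ℕ) := fun j => by
    simp [hedef]
  have hdsum : X₁ + X₂ = ∑ i, vecMulVec (P i) (Qr i) := by
    rw [hsplit (fun i => vecMulVec (P i) (Qr i)), hd₁, hd₂]
    congr 1
    · exact Finset.sum_congr rfl fun j _ => by rw [hPl j, hQl j]
    · exact Finset.sum_congr rfl fun j _ => by rw [hPr j, hQr2 j]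
  have hPli : LinearIndependent ℝ P := li_of_decomp (X₁ + X₂) P Qr hdsum hsum
  have hQrli : LinearIndependent ℝ Qr := by
    have hdT : (X₁ + X₂)ᵀ = ∑ i, vecMulVec (Qr i) (P i) := by
      rw [hdsum]
      ext j a
      simp only [Matrix.transpose_apply, Matrix.sum_apply, Matrix.vecMulVec_apply]
      exact Finset.sum_congr rfl fun i _ => by ring
    exact li_of_decomp (X₁ + X₂)ᵀ Qr P hdT (by rw [Matrix.rank_transpose]; exact hsum)
  set σ : Fin (r₁ + r₂) → ℝ := fun i => if (i : ℕ) < r₁ then 1 else 2 with hσdef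
  have hσpos : ∀ i, 0 < σ i := fun i => by
    by_cases h : (i : ℕ) < r₁ <;> simp [hσdef, h]
  set Q : Fin (r₁ + r₂) → Fin Kp → ℝ := fun i => (σ i)⁻¹ • Qr i with hQdef
  have hQli : LinearIndependent ℝ Q := by
    have := hQrli.units_smul (fun i => Units.mk0 ((σ i)⁻¹) (by
      exact inv_ne_zero (hσpos i).ne'))
    convert this using 1
    ext i k
    simp [hQdef, Units.smul_def]
  have hsv : ∀ i, σ i • vecMulVec (P i) (Q i) = vecMulVec (P i) (Qr i) := by
    intro i
    have hne : σ i ≠ 0 := (hσpos i).ne'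
    ext a c
    simp only [Matrix.smul_apply, Matrix.vecMulVec_apply, hQdef, Pi.smul_apply, smul_eq_mul]
    field_simp
  obtain ⟨Lm, hLmpsd, hLmrank, hLmorth⟩ := exists_gram P hPli
  obtain ⟨R, hRpsd, hRrank, hRorth⟩ := exists_gram Q hQli
  refine ⟨Lm, R, P, Q, σ, hLmpsd, hRpsd, hLmrank, hRrank, hLmorth, hRorth, hσpos, ?_, ?_, ?_⟩
  · rw [Finset.sum_filter]
    rw [hsplit (fun i => if (i : ℕ) < r₁ then σ i • vecMulVec (P i) (Q i) else 0)]
    have ha : ∀ j : Fin r₁, (if ((e (Sum.inl j) : Fin (r₁ + r₂)) : ℕ) < r₁ then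
        σ (e (Sum.inl j)) • vecMulVec (P (e (Sum.inl j))) (Q (e (Sum.inl j))) else 0)
        = vecMulVec (b₁ j) (q₁ j) := by
      intro j
      rw [if_pos (hcl j), hsv, hPl j, hQl j]
    have hb : ∀ j : Fin r₂, (if ((e (Sum.inr j) : Fin (r₁ + r₂)) : ℕ) < r₁ then
        σ (e (Sum.inr j)) • vecMulVec (P (e (Sum.inr j))) (Q (e (Sum.inr j))) else 0)
        = 0 := by
      intro j
      rw [if_neg (not_lt.mpr (hcr j))]
    rw [Finset.sum_congr rfl fun j _ => ha j, Finset.sum_congr rfl fun j _ => hb j]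
    simp [hd₁]
  · rw [Finset.sum_filter]
    rw [hsplit (fun i => if r₁ ≤ (i : ℕ) then σ i • vecMulVec (P i) (Q i) else 0)]
    have ha : ∀ j : Fin r₁, (if r₁ ≤ ((e (Sum.inl j) : Fin (r₁ + r₂)) : ℕ) then
        σ (e (Sum.inl j)) • vecMulVec (P (e (Sum.inl j))) (Q (e (Sum.inl j))) else 0)
        = 0 := by
      intro j
      rw [if_neg (not_le.mpr (hcl j))]
    have hb : ∀ j : Fin r₂, (if r₁ ≤ ((e (Sum.inr j) : Fin (r₁ + r₂)) : ℕ) then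
        σ (e (Sum.inr j)) • vecMulVec (P (e (Sum.inr j))) (Q (e (Sum.inr j))) else 0)
        = vecMulVec (b₂ j) (q₂ j) := by
      intro j
      rw [if_pos (hcr j), hsv, hPr j, hQr2 j]
    rw [Finset.sum_congr rfl fun j _ => ha j, Finset.sum_congr rfl fun j _ => hb j]
    simp [hd₂]
  · intro i j hi hj
    simp only [hσdef]
    rw [if_pos hi, if_neg (by omega)]
    norm_num
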